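/- Fix 0 < r < 1. Define ν : ℓ1 → ℝ by ν(a) = r·|Σ_{n=1}^∞ a_n| + Σ_{n=2}^∞ |a_n| for a = (a_n) ∈ ℓ1, and define the linear map T : ℓ1 → ℓ1 by T(a) = (r·Σ_{n=1}^∞ a_n, a_2, a_3, …). Then ν is a norm on ℓ1, T is a linear bijection of ℓ1 onto ℓ1, and ‖T(a)‖₁ = ν(a) for every a ∈ ℓ1; in other words, (ℓ1, ν) is isometrically isomorphic to (ℓ1, ‖·‖₁). -/

import Mathlib

open NormedSpace Filter Topology Function

noncomputable section

namespace Stmt3Aux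

abbrev L1 := lp (fun _ : ℕ => ℝ) 1

lemma summable_abs (a : L1) : Summable (fun n => |(a : ℕ → ℝ) n|) := by
  have := (lp.memℓp a).summable (p := 1) (by norm_num)
  simpa [Real.norm_eq_abs] using this

lemma summable_coe (a : L1) : Summable (fun n => (a : ℕ → ℝ) n) :=
  (summable_abs a).of_abs

lemma mem_update (a : L1) (v : ℝ) : Memℓp (Function.update (⇑a) 0 v) 1 := by
  apply memℓp_gen
  have hs := (summable_abs a).update 0 |v|
  apply hs.congr
  intro n
  simp [Function.update_apply, Real.norm_eq_abs]
  split <;> simp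

def Tf (r : ℝ) (a : L1) : L1 := ⟨Function.update (⇑a) 0 (r * ∑' k, (a : ℕ → ℝ) k), mem_update a _⟩

lemma Tf_apply (r : ℝ) (a : L1) (n : ℕ) :
    (Tf r a : ℕ → ℝ) n = if n = 0 then r * ∑' k, (a : ℕ → ℝ) k else a n := by
  simp [Tf, Function.update_apply]

def Sf (r : ℝ) (b : L1) : L1 :=
  ⟨Function.update (⇑b) 0 ((b : ℕ → ℝ) 0 / r - ∑' k, (b : ℕ → ℝ) (k + 1)), mem_update b _⟩

lemma Sf_apply (r : ℝ) (b : L1) (n : ℕ) :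
    (Sf r b : ℕ → ℝ) n =
      if n = 0 then (b : ℕ → ℝ) 0 / r - ∑' k, (b : ℕ → ℝ) (k + 1) else b n := by
  simp [Sf, Function.update_apply]

end Stmt3Aux

open Stmt3Aux

/-- For `0 < r < 1`, the functional
`ν(a) = r⬝|Σₙ aₙ| + Σ_{n≥2} |aₙ|` is a norm on `ℓ¹` and the map
`T(a) = (r⬝Σₙ aₙ, a₂, a₃, …)` is a linear bijection of `ℓ¹` satisfying
`‖T a‖₁ = ν a`; i.e. `(ℓ¹, ν)` is isometrically isomorphic to `(ℓ¹, ‖·‖₁)`.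
(Sequences are indexed by `ℕ` starting at `0`, so `a (n+1)` plays the role of
the paper's `a_{n+2}`-tail, and the `0`-th coordinate is the paper's first one.) -/
theorem stmt_3 (r : ℝ) (hr0 : 0 < r) (hr1 : r < 1)
    (ν : lp (fun _ : ℕ => ℝ) 1 → ℝ)
    (hν : ∀ a : lp (fun _ : ℕ => ℝ) 1,
      ν a = r * |∑' n : ℕ, a n| + ∑' n : ℕ, |a (n + 1)|) :
    (∀ a, ν a = 0 ↔ a = 0) ∧
    (∀ a b, ν (a + b) ≤ ν a + ν b) ∧
    (∀ (c : ℝ) (a), ν (c • a) = |c| * ν a) ∧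
    ∃ T : lp (fun _ : ℕ => ℝ) 1 ≃ₗ[ℝ] lp (fun _ : ℕ => ℝ) 1,
      (∀ (a) (n : ℕ), T a n = if n = 0 then r * ∑' k : ℕ, a k else a n) ∧
      ∀ a, ‖T a‖ = ν a := by
  have hrne : r ≠ 0 := hr0.ne'
  -- the linear equivalence
  have Teq : ∃ T : L1 ≃ₗ[ℝ] L1, ∀ a, T a = Tf r a := by
    refine ⟨{ toFun := Tf r
              invFun := Sf r
              map_add' := ?_
              map_smul' := ?_
              left_inv := ?_
              right_inv := ?_ }, fun a => rfl⟩
    · intro a b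
      apply lp.ext; funext n
      rcases eq_or_ne n 0 with h | h
      · simp only [Tf_apply, h, if_pos, lp.coeFn_add, Pi.add_apply]
        rw [Summable.tsum_add (summable_coe a) (summable_coe b)]; ring
      · simp [Tf_apply, h]
    · intro c a
      apply lp.ext; funext n
      rcases eq_or_ne n 0 with h | h <;>
        simp [Tf_apply, h, lp.coeFn_smul, Pi.smul_apply, tsum_mul_left, smul_eq_mul]
      ring
    · intro a
      apply lp.ext; funext n
      rcases eq_or_ne n 0 with h | h
      · have h0 : ∑' k, (a : ℕ → ℝ) k = a 0 + ∑' k, (a : ℕ → ℝ) (k + 1) :=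
          Summable.tsum_eq_zero_add (summable_coe a)
        have htail : (fun k => (Tf r a : ℕ → ℝ) (k + 1)) = fun k => (a : ℕ → ℝ) (k + 1) := by
          funext k; simp [Tf_apply]
        simp only [Sf_apply, Tf_apply, h, if_pos rfl, htail, ↓reduceIte, Nat.add_one_ne_zero]
        field_simp
        linarith [h0]
      · simp [Sf_apply, Tf_apply, h]
    · intro b
      apply lp.ext; funext n
      rcases eq_or_ne n 0 with h | h
      · have hs : Summable (fun k => (Sf r b : ℕ → ℝ) k) := summable_coe (Sf r b)
        have htail : (fun k => (Sf r b : ℕ → ℝ) (k + 1)) = fun k => (b : ℕ → ℝ) (k + 1) := by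
          funext k; simp [Sf_apply]
        have h0 : ∑' k, (Sf r b : ℕ → ℝ) k = (b : ℕ → ℝ) 0 / r := by
          rw [Summable.tsum_eq_zero_add hs, htail, Sf_apply]
          simp
        rw [Tf_apply, h, if_pos rfl, h0]
        field_simp
      · simp [Sf_apply, Tf_apply, h]
  obtain ⟨T, hT⟩ := Teq
  have hTapp : ∀ (a : L1) (n : ℕ),
      (T a : ℕ → ℝ) n = if n = 0 then r * ∑' k, (a : ℕ → ℝ) k else a n := by
    intro a n; rw [hT]; exact Tf_apply r a n
  have hnorm : ∀ a : L1, ‖T a‖ = ν a := by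
    intro a
    have h1 : ‖T a‖ = ∑' n, ‖(T a : ℕ → ℝ) n‖ := by
      have := lp.norm_eq_tsum_rpow (p := 1) (by norm_num) (T a)
      simpa using this
    have hs : Summable fun n => ‖(T a : ℕ → ℝ) n‖ :=
      ((lp.memℓp (T a)).summable (p := 1) (by norm_num)).congr (by simp)
    rw [h1, Summable.tsum_eq_zero_add hs, hν]
    have h0 : ‖(T a : ℕ → ℝ) 0‖ = r * |∑' n, (a : ℕ → ℝ) n| := by
      rw [hTapp]; simp [Real.norm_eq_abs, abs_mul, abs_of_pos hr0]
    have ht : (fun n => ‖(T a : ℕ → ℝ) (n + 1)‖) = fun n => |(a : ℕ → ℝ) (n + 1)| := by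
      funext n; rw [hTapp]; simp [Real.norm_eq_abs]
    rw [h0, ht]
  refine ⟨?_, ?_, ?_, T, hTapp, hnorm⟩
  · intro a
    rw [← hnorm, norm_eq_zero]
    exact ⟨fun h => by simpa using T.injective (by simpa using h), fun h => by simp [h]⟩
  · intro a b
    rw [← hnorm, ← hnorm, ← hnorm, map_add]
    exact norm_add_le _ _
  · intro c a
    rw [← hnorm, ← hnorm, map_smul, norm_smul, Real.norm_eq_abs]
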